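/- Let σ be an involution of {1,…,n} with exactly k two-cycles, written σ = (i_1,j_1)⋯(i_k,j_k) with i_s < j_s for all s and i_1 < i_2 < ⋯ < i_k, and set r_s(σ) := #{p : i_p < i_s and j_p < j_s} + #{p : j_p < i_s}. Then the dimension over ℂ of the vector space of (not necessarily strictly) upper-triangular n×n complex matrices z satisfying z·N_σ = N_σ·z equals n(n+1)/2 − (kn − Σ_{s=1}^{k}(j_s − i_s) − Σ_{s=1}^{k} r_s(σ)). (This space is the Lie algebra of the stabilizer of N_σ in B, so since dim B = n(n+1)/2 this identity is equivalent to the paper's formula dim B·N_σ = kn − Σ_{s=1}^{k}(j_s − i_s) − Σ_{s=1}^{k} r_s(σ).) -/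

import Mathlib

open Matrix

open Finset

/-- A matrix is strictly upper-triangular. -/
def StrictUpper {n : ℕ} (x : Matrix (Fin n) (Fin n) ℂ) : Prop :=
  ∀ a b : Fin n, b ≤ a → x a b = 0

/-- A matrix is (weakly) upper-triangular. -/
def UpperTri {n : ℕ} (x : Matrix (Fin n) (Fin n) ℂ) : Prop :=
  ∀ a b : Fin n, b < a → x a b = 0

/-- The orbit of a matrix under conjugation by invertible upper-triangular matrices. -/
def Borbit {n : ℕ} (x : Matrix (Fin n) (Fin n) ℂ) : Set (Matrix (Fin n) (Fin n) ℂ) :=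
  {y | ∃ b : Matrix (Fin n) (Fin n) ℂ, IsUnit b ∧ UpperTri b ∧ y = b * x * b⁻¹}

/-- A permutation is an involution. -/
def IsInvol {n : ℕ} (σ : Equiv.Perm (Fin n)) : Prop := σ * σ = 1

/-- The strictly upper-triangular part `N_σ` of the permutation matrix of `σ`. -/
def Nmat {n : ℕ} (σ : Equiv.Perm (Fin n)) : Matrix (Fin n) (Fin n) ℂ :=
  Matrix.of fun a b => if a < b ∧ σ a = b then (1 : ℂ) else 0

/-- The submatrix `π_{i,j}(x)` on rows and columns `i,…,j` (1-based), for `1 ≤ i ≤ j ≤ n`. -/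
def blk {n : ℕ} (x : Matrix (Fin n) (Fin n) ℂ) (i j : ℕ)
    (h1 : 1 ≤ i) (h2 : i ≤ j) (h3 : j ≤ n) :
    Matrix (Fin (j + 1 - i)) (Fin (j + 1 - i)) ℂ :=
  Matrix.of fun a b =>
    x ⟨i - 1 + a.1, by have := a.2; omega⟩ ⟨i - 1 + b.1, by have := b.2; omega⟩

/-- The rank matrix of `N_σ` (1-based indices, 0 outside the range `1 ≤ i < j ≤ n`). -/
noncomputable def Rfun {n : ℕ} (σ : Equiv.Perm (Fin n)) : ℕ → ℕ → ℕ := fun i j =>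
  if h : 1 ≤ i ∧ i < j ∧ j ≤ n then (blk (Nmat σ) i j h.1 h.2.1.le h.2.2).rank
  else 0

/-- The number of two-cycles of an involution. -/
def numCycles {n : ℕ} (σ : Equiv.Perm (Fin n)) : ℕ :=
  (Finset.univ.filter fun a : Fin n => a < σ a).card

/-- Evaluation of a polynomial in the matrix entries at a matrix. -/
noncomputable def evalMat {n : ℕ} (x : Matrix (Fin n) (Fin n) ℂ)
    (f : MvPolynomial (Fin n × Fin n) ℂ) : ℂ :=
  MvPolynomial.eval (fun p => x p.1 p.2) f

/-- The vanishing ideal of a set of matrices. -/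
noncomputable def vanishingIdeal {n : ℕ} (S : Set (Matrix (Fin n) (Fin n) ℂ)) :
    Ideal (MvPolynomial (Fin n × Fin n) ℂ) where
  carrier := {f | ∀ x ∈ S, evalMat x f = 0}
  add_mem' := by
    intro a b ha hb x hx
    simp only [evalMat, map_add] at *
    rw [ha x hx, hb x hx, add_zero]
  zero_mem' := by
    intro x hx
    simp [evalMat]
  smul_mem' := by
    intro c f hf x hx
    simp only [evalMat, smul_eq_mul, _root_.map_mul] at *
    rw [hf x hx, mul_zero]

/-- The Zariski closure of a set of matrices: the common zero set of its vanishing ideal. -/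
noncomputable def zclosure {n : ℕ} (S : Set (Matrix (Fin n) (Fin n) ℂ)) :
    Set (Matrix (Fin n) (Fin n) ℂ) :=
  {x | ∀ f ∈ vanishingIdeal S, evalMat x f = 0}

/-- The space of upper-triangular matrices commuting with a given matrix
(the Lie algebra of the stabilizer of `N` in `B`). -/
noncomputable def commUT {n : ℕ} (N : Matrix (Fin n) (Fin n) ℂ) :
    Submodule ℂ (Matrix (Fin n) (Fin n) ℂ) where
  carrier := {z | UpperTri z ∧ z * N = N * z}
  add_mem' := by
    rintro a b ⟨ha1, ha2⟩ ⟨hb1, hb2⟩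
    refine ⟨fun p q h => ?_, by rw [add_mul, mul_add, ha2, hb2]⟩
    simp [Matrix.add_apply, ha1 p q h, hb1 p q h]
  zero_mem' := ⟨fun p q h => rfl, by simp⟩
  smul_mem' := by
    rintro c a ⟨ha1, ha2⟩
    refine ⟨fun p q h => ?_, by rw [Matrix.smul_mul, Matrix.mul_smul, ha2]⟩
    simp [Matrix.smul_apply, ha1 p q h]




def FreeP {n k : ℕ} (i j : Fin k → Fin n) (p : Fin n × Fin n) : Prop :=
  p.1 ≤ p.2 ∧ (∀ t, p.2 ≠ i t) ∧ ((∃ s, p.1 = j s) → ∃ t, p.2 = j t) ∧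
    ∀ s t, p.1 = j s → p.2 = j t → s ≤ t

instance {n k : ℕ} (i j : Fin k → Fin n) : DecidablePred (FreeP i j) := fun p => by
  unfold FreeP; infer_instance

def Sfin {n k : ℕ} (i j : Fin k → Fin n) : Finset (Fin n × Fin n) := univ.filter (FreeP i j)



section Helpers
variable {α β : Type*} [Fintype α] [Fintype β] [DecidableEq α] [DecidableEq β]

lemma sum_card_fst' (P : α → β → Prop) [∀ s t, Decidable (P s t)] :
    ∑ s : α, (univ.filter fun t => P s t).card
      = (univ.filter fun q : α × β => P q.1 q.2).card := by
  rw [Finset.card_eq_sum_card_fiberwise (f := Prod.fst) (t := univ) (fun x _ => mem_univ _)]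
  refine Finset.sum_congr rfl fun s _ => ?_
  refine Finset.card_bij' (fun t _ => (s, t)) (fun q _ => q.2) ?_ ?_ ?_ ?_
  · intro t ht; simp only [mem_filter, mem_univ, true_and] at ht ⊢; simp [ht]
  · intro q hq; simp only [mem_filter, mem_univ, true_and] at hq ⊢
    obtain ⟨hq1, hq2⟩ := hq; subst hq2; exact hq1
  · intro t ht; rfl
  · intro q hq; simp only [mem_filter, mem_univ, true_and] at hq
    obtain ⟨hq1, hq2⟩ := hq; exact Prod.ext hq2.symm rfl

lemma sum_card_snd' (P : α → β → Prop) [∀ s t, Decidable (P s t)] :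
    ∑ t : β, (univ.filter fun s => P s t).card
      = (univ.filter fun q : α × β => P q.1 q.2).card := by
  rw [Finset.card_eq_sum_card_fiberwise (f := Prod.snd) (t := univ) (fun x _ => mem_univ _)]
  refine Finset.sum_congr rfl fun t _ => ?_
  refine Finset.card_bij' (fun s _ => (s, t)) (fun q _ => q.1) ?_ ?_ ?_ ?_
  · intro s hs; simp only [mem_filter, mem_univ, true_and] at hs ⊢; simp [hs]
  · intro q hq; simp only [mem_filter, mem_univ, true_and] at hq ⊢
    obtain ⟨hq1, hq2⟩ := hq; subst hq2; exact hq1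
  · intro s hs; rfl
  · intro q hq; simp only [mem_filter, mem_univ, true_and] at hq
    obtain ⟨hq1, hq2⟩ := hq; exact Prod.ext rfl hq2.symm

lemma card_swap' (P : α → β → Prop) [∀ s t, Decidable (P s t)] :
    (univ.filter fun q : α × β => P q.1 q.2).card
      = (univ.filter fun q : β × α => P q.2 q.1).card := by
  refine Finset.card_bij' (fun q _ => q.swap) (fun q _ => q.swap) ?_ ?_ ?_ ?_ <;>
    simp +contextual [Prod.swap]

lemma two_mul_card_lt {k : ℕ} {γ : Type*} [LinearOrder γ] (f : Fin k → γ)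
    (hf : Function.Injective f) :
    2 * (univ.filter fun q : Fin k × Fin k => f q.2 < f q.1).card + k = k * k := by
  have h1 := Finset.card_filter_add_card_filter_not
    (s := (univ : Finset (Fin k × Fin k))) (p := fun q => f q.2 < f q.1)
  have hswap := card_swap' (fun s t : Fin k => f t < f s)
  have h3 := Finset.card_filter_add_card_filter_not
    (s := univ.filter fun q : Fin k × Fin k => ¬ f q.2 < f q.1) (p := fun q => q.1 = q.2)
  rw [Finset.filter_filter, Finset.filter_filter] at h3
  have hdiag : (univ.filter fun q : Fin k × Fin k => ¬ f q.2 < f q.1 ∧ q.1 = q.2).card = k := by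
    rw [show (univ.filter fun q : Fin k × Fin k => ¬ f q.2 < f q.1 ∧ q.1 = q.2)
        = univ.image (fun d : Fin k => (d, d)) by
      ext q; simp only [mem_filter, mem_univ, true_and, mem_image]
      constructor
      · rintro ⟨-, h⟩; exact ⟨q.2, Prod.ext h.symm rfl⟩
      · rintro ⟨d, rfl⟩; simp]
    rw [Finset.card_image_of_injective _ (fun a b h => (Prod.mk.injEq _ _ _ _).mp h |>.1)]
    simp
  have hoff : (univ.filter fun q : Fin k × Fin k => ¬ f q.2 < f q.1 ∧ ¬ q.1 = q.2)
      = (univ.filter fun q : Fin k × Fin k => f q.1 < f q.2) := by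
    apply Finset.filter_congr
    rintro q -
    constructor
    · rintro ⟨h1, h2⟩
      exact lt_of_le_of_ne (not_lt.mp h1) (fun h => h2 (hf h))
    · intro h; exact ⟨fun h' => absurd (h.trans h') (lt_irrefl _), fun h' => by simp [h'] at h⟩
  rw [hoff] at h3
  have hcard : (univ : Finset (Fin k × Fin k)).card = k * k := by simp
  have hswap2 : (univ.filter fun q : Fin k × Fin k => f q.1 < f q.2).card
      = (univ.filter fun q : Fin k × Fin k => f q.2 < f q.1).card := by
    rw [hswap]
  omega

end Helpers


lemma gauss_fin (n : ℕ) : 2 * (∑ b : Fin n, ((b : ℕ) + 1)) = n * (n + 1) := by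
  rw [Fin.sum_univ_eq_sum_range (fun m => m + 1) n, Finset.sum_add_distrib]
  simp only [Finset.sum_const, Finset.card_range, smul_eq_mul, mul_one]
  have := Finset.sum_range_id_mul_two n
  cases n with
  | zero => simp
  | succ m =>
    simp only [Nat.add_sub_cancel] at this
    ring_nf
    ring_nf at this
    omega

lemma gauss_div (n : ℕ) : 2 * (n * (n + 1) / 2) = n * (n + 1) :=
  Nat.two_mul_div_two_of_even (Nat.even_mul_succ_self n)


section Cols
variable {n k : ℕ} (i j : Fin k → Fin n)

lemma card_le_col (b : Fin n) : (univ.filter (· ≤ b)).card = (b : ℕ) + 1 := by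
  rw [← Fin.card_Iic b]; congr 1; ext a; simp

lemma card_ge_col (a : Fin n) : (univ.filter (a ≤ ·)).card = n - (a : ℕ) := by
  rw [← Fin.card_Ici a]; congr 1; ext b; simp

variable (hij : ∀ s, i s < j s) (hmono : StrictMono i)
  (hjinj : Function.Injective j) (hdisj : ∀ s t, i s ≠ j t)

lemma col_I (t : Fin k) : (univ.filter fun a => FreeP i j (a, i t)) = ∅ := by
  rw [Finset.filter_eq_empty_iff]
  rintro a - ⟨-, h2, -, -⟩
  exact h2 t rfl

include hjinj hdisj in
lemma col_J (t : Fin k) :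
    ((univ.filter fun a : Fin n => FreeP i j (a, j t)).card : ℤ)
      = (j t : ℤ) + 1 - ((univ.filter fun s => t < s ∧ j s ≤ j t).card : ℤ) := by
  have hfe : (univ.filter fun a : Fin n => FreeP i j (a, j t))
      = univ.filter (fun a => a ≤ j t ∧ ∀ s, a = j s → s ≤ t) := by
    apply Finset.filter_congr
    rintro a -
    constructor
    · rintro ⟨h1, -, -, h4⟩
      exact ⟨h1, fun s hs => h4 s t hs rfl⟩
    · rintro ⟨h1, h2⟩
      refine ⟨h1, fun t' ht' => (hdisj t' t ?_).elim, fun _ => ⟨t, rfl⟩, ?_⟩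
      · exact ht'.symm
      · intro s t' hs ht'
        have := hjinj (show j t = j t' from ht')
        exact this ▸ h2 s hs
  have hsplit : (univ.filter (fun a : Fin n => a ≤ j t ∧ ∀ s, a = j s → s ≤ t)).card
      + (univ.filter (fun a : Fin n => a ≤ j t ∧ ¬ ∀ s, a = j s → s ≤ t)).card
      = (univ.filter (fun a : Fin n => a ≤ j t)).card := by
    rw [← Finset.filter_filter, ← Finset.filter_filter]
    exact Finset.card_filter_add_card_filter_not _
  have hbij : (univ.filter fun s => t < s ∧ j s ≤ j t).card
      = (univ.filter (fun a : Fin n => a ≤ j t ∧ ¬ ∀ s, a = j s → s ≤ t)).card := by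
    refine Finset.card_bij (fun s _ => j s) ?_ ?_ ?_
    · intro s hs
      simp only [mem_filter, mem_univ, true_and, not_forall] at hs ⊢
      exact ⟨hs.2, s, rfl, by omega⟩
    · intro s hs s' hs' h; exact hjinj h
    · intro a ha
      simp only [mem_filter, mem_univ, true_and, not_forall] at ha
      obtain ⟨h1, s, hs, hst⟩ := ha
      exact ⟨s, by simp only [mem_filter, mem_univ, true_and]; exact ⟨by omega, hs ▸ h1⟩, hs.symm⟩
  rw [hfe]
  have := card_le_col (j t)
  omega

include hjinj in
lemma col_F (b : Fin n) (hbI : ∀ t, b ≠ i t) (hbJ : ∀ t, b ≠ j t) :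
    ((univ.filter fun a : Fin n => FreeP i j (a, b)).card : ℤ)
      = (b : ℤ) + 1 - ((univ.filter fun s => j s ≤ b).card : ℤ) := by
  have hfe : (univ.filter fun a : Fin n => FreeP i j (a, b))
      = univ.filter (fun a => a ≤ b ∧ ∀ s, a ≠ j s) := by
    apply Finset.filter_congr
    rintro a -
    constructor
    · rintro ⟨h1, -, h3, -⟩
      refine ⟨h1, fun s hs => ?_⟩
      obtain ⟨t, ht⟩ := h3 ⟨s, hs⟩
      exact hbJ t ht
    · rintro ⟨h1, h2⟩
      refine ⟨h1, hbI, fun ⟨s, hs⟩ => (h2 s hs).elim, fun s t' hs => (h2 s hs).elim⟩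
  have hsplit : (univ.filter (fun a : Fin n => a ≤ b ∧ ∀ s, a ≠ j s)).card
      + (univ.filter (fun a : Fin n => a ≤ b ∧ ¬ ∀ s, a ≠ j s)).card
      = (univ.filter (fun a : Fin n => a ≤ b)).card := by
    rw [← Finset.filter_filter, ← Finset.filter_filter]
    exact Finset.card_filter_add_card_filter_not _
  have hbij : (univ.filter fun s => j s ≤ b).card
      = (univ.filter (fun a : Fin n => a ≤ b ∧ ¬ ∀ s, a ≠ j s)).card := by
    refine Finset.card_bij (fun s _ => j s) ?_ ?_ ?_
    · intro s hs
      simp only [mem_filter, mem_univ, true_and, not_forall, not_not] at hs ⊢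
      exact ⟨hs, s, by simp⟩
    · intro s hs s' hs' h; exact hjinj h
    · intro a ha
      simp only [mem_filter, mem_univ, true_and, not_forall, not_not] at ha
      obtain ⟨h1, s, hs⟩ := ha
      exact ⟨s, by simp only [mem_filter, mem_univ, true_and]; exact hs ▸ h1, hs.symm⟩
  rw [hfe]
  have := card_le_col b
  omega

end Cols


theorem card_Sfin_eq {n k : ℕ} (i j : Fin k → Fin n) (hij : ∀ s, i s < j s)
    (hmono : StrictMono i) (hjinj : Function.Injective j) (hdisj : ∀ s t, i s ≠ j t) :
    ((Sfin i j).card : ℤ) + (k : ℤ) * n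
      = ((n * (n + 1) / 2 : ℕ) : ℤ) + (∑ s : Fin k, ((j s : ℤ) - (i s : ℤ)))
        + ((univ.filter fun q : Fin k × Fin k => q.2 < q.1 ∧ j q.2 < j q.1).card : ℤ)
        + ((univ.filter fun q : Fin k × Fin k => j q.2 < i q.1).card : ℤ) := by
  classical
  have hiinj := hmono.injective
  -- column counts
  set f : Fin n → ℕ := fun b => (univ.filter fun a : Fin n => FreeP i j (a, b)).card with hf
  -- fiberwise decomposition
  have hfib : (Sfin i j).card = ∑ b : Fin n, f b := by
    rw [hf]
    rw [sum_card_snd' (fun a b : Fin n => FreeP i j (a, b))]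
    rw [Sfin]
  -- split the column sum
  set Is : Finset (Fin n) := univ.image i with hIs
  set Js : Finset (Fin n) := univ.image j with hJs
  have hdisjIJ : Disjoint Is Js := by
    rw [Finset.disjoint_left]
    rintro b hbI hbJ
    simp only [hIs, hJs, mem_image, mem_univ, true_and] at hbI hbJ
    obtain ⟨s, rfl⟩ := hbI
    obtain ⟨t, ht⟩ := hbJ
    exact hdisj s t ht.symm
  have hsplitf : ∀ g : Fin n → ℤ, (∑ b ∈ Is, g b) + (∑ b ∈ Js, g b)
      + (∑ b ∈ (Is ∪ Js)ᶜ, g b) = ∑ b : Fin n, g b := by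
    intro g
    rw [← Finset.sum_union hdisjIJ, Finset.sum_add_sum_compl]
  -- I columns vanish
  have hIzero : ∑ b ∈ Is, (f b : ℤ) = 0 := by
    rw [hIs, Finset.sum_image (fun a _ b _ h => hiinj h)]
    refine Finset.sum_eq_zero fun t _ => ?_
    simp [hf, col_I i j t]
  -- J columns
  have hJsum : ∑ b ∈ Js, (f b : ℤ) = (∑ t : Fin k, ((j t : ℤ) + 1))
      - ((univ.filter fun q : Fin k × Fin k => q.2 < q.1 ∧ j q.1 ≤ j q.2).card : ℤ) := by
    rw [hJs, Finset.sum_image (fun a _ b _ h => hjinj h)]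
    have : ∀ t : Fin k, (f (j t) : ℤ)
        = ((j t : ℤ) + 1) - ((univ.filter fun s => t < s ∧ j s ≤ j t).card : ℤ) :=
      fun t => col_J i j hjinj hdisj t
    rw [Finset.sum_congr rfl (fun t _ => this t), Finset.sum_sub_distrib]
    congr 1
    rw [← Nat.cast_sum]
    congr 1
    exact sum_card_snd' (fun s t : Fin k => t < s ∧ j s ≤ j t)
  -- F columns
  have hFsum : ∑ b ∈ (Is ∪ Js)ᶜ, (f b : ℤ)
      = (∑ b ∈ (Is ∪ Js)ᶜ, ((b : ℤ) + 1))
        - ∑ b ∈ (Is ∪ Js)ᶜ, ((univ.filter fun s => j s ≤ b).card : ℤ) := by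
    rw [← Finset.sum_sub_distrib]
    refine Finset.sum_congr rfl fun b hb => ?_
    simp only [Finset.mem_compl, Finset.mem_union, hIs, hJs, mem_image, mem_univ, true_and,
      not_or, not_exists] at hb
    exact col_F i j hjinj b (fun t h => hb.1 t h.symm) (fun t h => hb.2 t h.symm)
  -- arithmetic pieces
  have e1 : ∑ t : Fin k, ((j t : ℤ) + 1) = (∑ t : Fin k, (j t : ℤ)) + k := by
    rw [Finset.sum_add_distrib]; simp
  have e2 : ∑ t : Fin k, ((i t : ℤ) + 1) = (∑ t : Fin k, (i t : ℤ)) + k := by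
    rw [Finset.sum_add_distrib]; simp
  have e4 : ∑ s : Fin k, ((j s : ℤ) - (i s : ℤ))
      = (∑ t : Fin k, (j t : ℤ)) - ∑ t : Fin k, (i t : ℤ) := Finset.sum_sub_distrib _ _
  -- Gauss
  have hgauss : ∑ b : Fin n, ((b : ℤ) + 1) = ((n * (n + 1) / 2 : ℕ) : ℤ) := by
    have h1 := gauss_fin n
    have h2 := gauss_div n
    have h3 : ∑ b : Fin n, ((b : ℤ) + 1) = ((∑ b : Fin n, ((b : ℕ) + 1) : ℕ) : ℤ) := by
      push_cast; rfl
    rw [h3]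
    have : (∑ b : Fin n, ((b : ℕ) + 1)) = n * (n + 1) / 2 := by omega
    rw [this]
  -- sums of (b+1) over the parts
  have hb1 : ∑ b ∈ Is, ((b : ℤ) + 1) = ∑ t : Fin k, ((i t : ℤ) + 1) := by
    rw [hIs, Finset.sum_image (fun a _ b _ h => hiinj h)]
  have hb2 : ∑ b ∈ Js, ((b : ℤ) + 1) = ∑ t : Fin k, ((j t : ℤ) + 1) := by
    rw [hJs, Finset.sum_image (fun a _ b _ h => hjinj h)]
  have hb3 := hsplitf (fun b => (b : ℤ) + 1)
  -- the Z-sums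
  set Z : Fin n → ℕ := fun b => (univ.filter fun s => j s ≤ b).card with hZ
  have hZuniv : ∑ b : Fin n, (Z b : ℤ) = (k : ℤ) * n - ∑ t : Fin k, (j t : ℤ) := by
    have h1 : ∑ b : Fin n, Z b = ∑ s : Fin k, (univ.filter fun b : Fin n => j s ≤ b).card := by
      rw [hZ, sum_card_snd' (fun s b => j s ≤ b), sum_card_fst' (fun s b => j s ≤ b)]
    have h2 : ∀ s : Fin k, ((univ.filter fun b : Fin n => j s ≤ b).card : ℤ)
        = (n : ℤ) - (j s : ℤ) := by
      intro s
      have := card_ge_col (j s)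
      have hle : (j s : ℕ) ≤ n := (j s).2.le
      rw [show (univ.filter fun b : Fin n => j s ≤ b) = univ.filter (j s ≤ ·) from rfl, this]
      omega
    rw [← Nat.cast_sum, h1, Nat.cast_sum, Finset.sum_congr rfl (fun s _ => h2 s),
      Finset.sum_sub_distrib]
    simp [mul_comm]
  have hZI : ∑ b ∈ Is, (Z b : ℤ)
      = ((univ.filter fun q : Fin k × Fin k => j q.2 < i q.1).card : ℤ) := by
    rw [hIs, Finset.sum_image (fun a _ b _ h => hiinj h), ← Nat.cast_sum]
    congr 1
    have h1 : ∀ t : Fin k, (univ.filter fun s => j s ≤ i t)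
        = (univ.filter fun s => j s < i t) := by
      intro t
      apply Finset.filter_congr
      rintro s -
      constructor
      · intro h; exact lt_of_le_of_ne h (fun hh => hdisj t s hh.symm)
      · exact le_of_lt
    have h2 : (∑ t : Fin k, Z (i t)) = ∑ t : Fin k, (univ.filter fun s => j s < i t).card :=
      Finset.sum_congr rfl (fun t _ => congrArg Finset.card (h1 t))
    rw [h2, sum_card_snd' (fun s t : Fin k => j s < i t)]
    exact card_swap' (fun s t : Fin k => j s < i t)
  have hZJ : ∑ b ∈ Js, (Z b : ℤ)
      = ((univ.filter fun q : Fin k × Fin k => j q.1 ≤ j q.2).card : ℤ) := by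
    rw [hJs, Finset.sum_image (fun a _ b _ h => hjinj h), ← Nat.cast_sum]
    congr 1
    rw [hZ]
    exact sum_card_snd' (fun s t : Fin k => j s ≤ j t)
  have hb4 := hsplitf (fun b => (Z b : ℤ))
  -- pair count identities
  set G : ℕ := (univ.filter fun q : Fin k × Fin k => q.2 < q.1).card with hG
  set Rp : ℕ := (univ.filter fun q : Fin k × Fin k => q.2 < q.1 ∧ j q.2 < j q.1).card with hRp
  set W : ℕ := (univ.filter fun q : Fin k × Fin k => q.2 < q.1 ∧ j q.1 ≤ j q.2).card with hW
  set H : ℕ := (univ.filter fun q : Fin k × Fin k => j q.2 < j q.1).card with hH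
  set M : ℕ := (univ.filter fun q : Fin k × Fin k => j q.1 ≤ j q.2).card with hM
  have hWRp : Rp + W = G := by
    rw [hRp, hW, hG]
    have := Finset.card_filter_add_card_filter_not
      (s := univ.filter fun q : Fin k × Fin k => q.2 < q.1) (p := fun q => j q.2 < j q.1)
    rw [Finset.filter_filter, Finset.filter_filter] at this
    rw [← this]
    congr 2
    apply Finset.filter_congr
    rintro q -
    simp [not_lt]
  have hGk : 2 * G + k = k * k := by
    have := two_mul_card_lt (fun s : Fin k => s) (fun a b h => h)
    simpa [hG] using this
  have hHk : 2 * H + k = k * k := by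
    have := two_mul_card_lt j hjinj
    simpa [hH] using this
  have hMH : M + H = k * k := by
    have := Finset.card_filter_add_card_filter_not
      (s := (univ : Finset (Fin k × Fin k))) (p := fun q => j q.1 ≤ j q.2)
    rw [hM, hH]
    have hcu : (univ : Finset (Fin k × Fin k)).card = k * k := by simp
    rw [← hcu, ← this]
    congr 2
    apply Finset.filter_congr
    rintro q -
    simp [not_le]
  -- final assembly
  have hfz := hsplitf (fun b => (f b : ℤ))
  have hcast : ((Sfin i j).card : ℤ) = ∑ b : Fin n, (f b : ℤ) := by
    rw [hfib, Nat.cast_sum]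
  rw [hcast, ← hfz, hIzero, hJsum, hFsum]
  have hc1 : (∑ b ∈ (Is ∪ Js)ᶜ, ((b : ℤ) + 1))
      = ((n * (n + 1) / 2 : ℕ) : ℤ) - (∑ t : Fin k, ((i t : ℤ) + 1))
        - ∑ t : Fin k, ((j t : ℤ) + 1) := by
    rw [← hgauss, ← hb3, hb1, hb2]; ring
  have hc2 : (∑ b ∈ (Is ∪ Js)ᶜ, (Z b : ℤ))
      = ((k : ℤ) * n - ∑ t : Fin k, (j t : ℤ))
        - ((univ.filter fun q : Fin k × Fin k => j q.2 < i q.1).card : ℤ) - (M : ℤ) := by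
    rw [← hZuniv, ← hb4, hZI, hZJ]; ring
  rw [hc1, hc2, e1, e2, e4]
  have hWcast : ((univ.filter fun q : Fin k × Fin k => q.2 < q.1 ∧ j q.1 ≤ j q.2).card : ℤ)
      = (W : ℤ) := by rw [hW]
  have hRcast : ((univ.filter fun q : Fin k × Fin k => q.2 < q.1 ∧ j q.2 < j q.1).card : ℤ)
      = (Rp : ℤ) := by rw [hRp]
  rw [hWcast, hRcast]
  have hWRp' : (Rp : ℤ) + W = G := by exact_mod_cast hWRp
  have hGk' : 2 * (G : ℤ) + k = k * k := by exact_mod_cast hGk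
  have hHk' : 2 * (H : ℤ) + k = k * k := by exact_mod_cast hHk
  have hMH' : (M : ℤ) + H = k * k := by exact_mod_cast hMH
  linarith


section LinAlg
variable {n k : ℕ} (σ : Equiv.Perm (Fin n))

lemma mul_Nmat_apply (hinv : ∀ a, σ (σ a) = a) (z : Matrix (Fin n) (Fin n) ℂ) (a b : Fin n) :
    (z * Nmat σ) a b = if σ b < b then z a (σ b) else 0 := by
  rw [Matrix.mul_apply]
  rw [Finset.sum_eq_single (σ b)]
  · simp [Nmat, hinv b, mul_ite]
  · intro c _ hc
    rw [Nmat]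
    simp only [Matrix.of_apply]
    rw [if_neg, mul_zero]
    rintro ⟨-, h2⟩
    exact hc (by rw [← h2, hinv])
  · intro h; exact absurd (Finset.mem_univ _) h

lemma Nmat_mul_apply (hinv : ∀ a, σ (σ a) = a) (z : Matrix (Fin n) (Fin n) ℂ) (a b : Fin n) :
    (Nmat σ * z) a b = if a < σ a then z (σ a) b else 0 := by
  rw [Matrix.mul_apply]
  rw [Finset.sum_eq_single (σ a)]
  · simp [Nmat, ite_mul]
  · intro c _ hc
    rw [Nmat]
    simp only [Matrix.of_apply]
    rw [if_neg, zero_mul]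
    rintro ⟨-, h2⟩
    exact hc h2.symm
  · intro h; exact absurd (Finset.mem_univ _) h

lemma mem_commUT_iff (hinv : ∀ a, σ (σ a) = a) (z : Matrix (Fin n) (Fin n) ℂ) :
    z ∈ commUT (Nmat σ) ↔ UpperTri z ∧ ∀ a b : Fin n,
      (if σ b < b then z a (σ b) else 0) = (if a < σ a then z (σ a) b else 0) := by
  have h1 : z ∈ commUT (Nmat σ) ↔ UpperTri z ∧ z * Nmat σ = Nmat σ * z := Iff.rfl
  rw [h1]
  constructor
  · rintro ⟨hu, he⟩
    refine ⟨hu, fun a b => ?_⟩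
    rw [← mul_Nmat_apply σ hinv, ← Nmat_mul_apply σ hinv, he]
  · rintro ⟨hu, he⟩
    refine ⟨hu, ?_⟩
    ext a b
    rw [mul_Nmat_apply σ hinv, Nmat_mul_apply σ hinv]
    exact he a b

end LinAlg

theorem finrank_commUT {n k : ℕ} (σ : Equiv.Perm (Fin n)) (hσ : IsInvol σ)
    (i j : Fin k → Fin n) (hij : ∀ s, i s < j s) (hmono : StrictMono i)
    (hcyc : ∀ s, σ (i s) = j s)
    (hfix : ∀ a : Fin n, (∀ s, a ≠ i s ∧ a ≠ j s) → σ a = a) :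
    Module.finrank ℂ (commUT (Nmat σ)) = (Sfin i j).card := by
  classical
  have hinv : ∀ a, σ (σ a) = a := by
    intro a
    have := Equiv.ext_iff.mp hσ a
    simpa using this
  have hji : ∀ s, σ (j s) = i s := fun s => by rw [← hcyc s, hinv]
  have hdisj : ∀ s t, i s ≠ j t := by
    intro s t h
    have h2 : j s = i t := by rw [← hcyc s, h, hji t]
    have h1 := hij s
    rw [h, h2] at h1
    exact absurd (hij t) (not_lt.mpr h1.le)
  have hjinj : Function.Injective j := by
    intro s t h
    apply hmono.injective
    rw [← hji s, ← hji t, h]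
  have memI : ∀ a : Fin n, a < σ a ↔ ∃ s, a = i s := by
    intro a
    constructor
    · intro h
      by_contra hno
      push_neg at hno
      by_cases hJ : ∃ s, a = j s
      · obtain ⟨s, rfl⟩ := hJ
        rw [hji] at h
        exact absurd h (not_lt.mpr (hij s).le)
      · push_neg at hJ
        rw [hfix a (fun s => ⟨hno s, hJ s⟩)] at h
        exact lt_irrefl _ h
    · rintro ⟨s, rfl⟩; rw [hcyc]; exact hij s
  have memJ : ∀ a : Fin n, σ a < a ↔ ∃ s, a = j s := by
    intro a
    constructor
    · intro h
      by_contra hno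
      push_neg at hno
      by_cases hI : ∃ s, a = i s
      · obtain ⟨s, rfl⟩ := hI
        rw [hcyc] at h
        exact absurd h (not_lt.mpr (hij s).le)
      · push_neg at hI
        rw [hfix a (fun s => ⟨hI s, hno s⟩)] at h
        exact lt_irrefl _ h
    · rintro ⟨s, rfl⟩; rw [hji]; exact hij s
  -- the restriction linear map
  let Φ : commUT (Nmat σ) →ₗ[ℂ] (↥(Sfin i j) → ℂ) :=
  { toFun := fun z p => (z : Matrix (Fin n) (Fin n) ℂ) p.1.1 p.1.2
    map_add' := fun x y => by funext p; simp [Matrix.add_apply]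
    map_smul' := fun c x => by funext p; simp [Matrix.smul_apply] }
  have hinj : ∀ z : commUT (Nmat σ), Φ z = 0 → z = 0 := by
    intro z hz
    obtain ⟨hUT, heq⟩ := (mem_commUT_iff σ hinv z).mp z.2
    have hz' : ∀ p : Fin n × Fin n, FreeP i j p → (z : Matrix (Fin n) (Fin n) ℂ) p.1 p.2 = 0 := by
      intro p hp
      exact congrFun hz ⟨p, by simp [Sfin, hp]⟩
    apply Subtype.ext
    funext a b
    show (z : Matrix (Fin n) (Fin n) ℂ) a b = 0
    by_cases hab : a ≤ b
    swap
    · exact hUT a b (not_le.mp hab)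
    by_cases hfree : FreeP i j (a, b)
    · exact hz' (a, b) hfree
    by_cases hbI : ∃ t, b = i t
    · obtain ⟨t, rfl⟩ := hbI
      have he := heq a (j t)
      rw [if_pos (show σ (j t) < j t by rw [hji]; exact hij t), hji] at he
      by_cases haI : a < σ a
      · obtain ⟨s, rfl⟩ := (memI a).mp haI
        rw [if_pos haI, hcyc] at he
        have hst : s ≤ t := by
          by_contra hc
          push_neg at hc
          exact absurd hab (not_le.mpr (hmono hc))
        by_cases hjj : j s ≤ j t
        · have hfr : FreeP i j (j s, j t) :=
            ⟨hjj, fun t' h => hdisj t' t h.symm, fun _ => ⟨t, rfl⟩,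
              fun s' t' hs' ht' => by rw [← hjinj hs', ← hjinj ht']; exact hst⟩
          rw [he]
          exact hz' (j s, j t) hfr
        · rw [he]
          exact hUT _ _ (not_le.mp hjj)
      · rw [if_neg haI] at he
        exact he
    push_neg at hbI
    by_cases haJ : ∃ s, a = j s
    · obtain ⟨s, rfl⟩ := haJ
      by_cases hbJ : ∃ t, b = j t
      · obtain ⟨t, rfl⟩ := hbJ
        have hts : ¬ s ≤ t := by
          intro hst
          exact hfree ⟨hab, hbI, fun _ => ⟨t, rfl⟩,
            fun s' t' hs' ht' => by rw [← hjinj hs', ← hjinj ht']; exact hst⟩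
        have he := heq (i s) (j t)
        rw [if_pos (show σ (j t) < j t by rw [hji]; exact hij t), hji,
          if_pos (show i s < σ (i s) by rw [hcyc]; exact hij s), hcyc] at he
        rw [← he]
        exact hUT _ _ (hmono (not_le.mp hts))
      · have he := heq (i s) b
        have hnb : ¬ σ b < b := fun hcon => hbJ ((memJ b).mp hcon)
        rw [if_neg hnb, if_pos (show i s < σ (i s) by rw [hcyc]; exact hij s), hcyc] at he
        exact he.symm
    · exfalso
      apply hfree
      exact ⟨hab, hbI, fun hS => absurd hS haJ, fun s' t' hs' _ => absurd ⟨s', hs'⟩ haJ⟩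
  have hsurj : Function.Surjective Φ := by
    intro c
    set c' : Fin n → Fin n → ℂ :=
      fun a b => if h : FreeP i j (a, b) then c ⟨(a, b), by simp [Sfin, h]⟩ else 0 with hc'
    set z : Matrix (Fin n) (Fin n) ℂ :=
      Matrix.of (fun a b => if a < σ a ∧ b < σ b then c' (σ a) (σ b) else c' a b) with hzdef
    have hzap : ∀ a b, z a b = if a < σ a ∧ b < σ b then c' (σ a) (σ b) else c' a b :=
      fun a b => rfl
    have hzUT : UpperTri z := by
      intro a b hlt
      rw [hzap]
      split
      · next h =>
        obtain ⟨s, hs⟩ := (memI a).mp h.1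
        obtain ⟨t, ht⟩ := (memI b).mp h.2
        subst hs; subst ht
        rw [hcyc, hcyc]
        apply dif_neg
        rintro ⟨-, -, -, h4⟩
        exact absurd (h4 s t rfl rfl) (not_le.mpr (hmono.lt_iff_lt.mp hlt))
      · next h =>
        apply dif_neg
        intro hfr
        exact absurd hfr.1 (not_le.mpr hlt)
    have hzeq : ∀ a b : Fin n,
        (if σ b < b then z a (σ b) else 0) = (if a < σ a then z (σ a) b else 0) := by
      intro a b
      by_cases hbJ : σ b < b <;> by_cases haI : a < σ a
      · rw [if_pos hbJ, if_pos haI, hzap, hzap]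
        have h1 : σ b < σ (σ b) := by rw [hinv]; exact hbJ
        have h2 : ¬ σ a < σ (σ a) := by rw [hinv]; exact not_lt.mpr haI.le
        rw [if_pos ⟨haI, h1⟩, if_neg (fun hc => h2 hc.1), hinv]
      · rw [if_pos hbJ, if_neg haI, hzap, if_neg (fun hc => haI hc.1)]
        apply dif_neg
        intro hfr
        obtain ⟨t, ht⟩ := (memJ b).mp hbJ
        exact hfr.2.1 t (by rw [ht, hji])
      · rw [if_neg hbJ, if_pos haI, hzap]
        have h2 : ¬ σ a < σ (σ a) := by rw [hinv]; exact not_lt.mpr haI.le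
        rw [if_neg (fun hc => h2 hc.1)]
        symm
        apply dif_neg
        intro hfr
        obtain ⟨s, hs⟩ := (memI a).mp haI
        obtain ⟨t, ht⟩ := hfr.2.2.1 ⟨s, by rw [hs, hcyc]⟩
        exact hbJ (by rw [show b = j t from ht, hji]; exact hij t)
      · rw [if_neg hbJ, if_neg haI]
    have hmem : z ∈ commUT (Nmat σ) := (mem_commUT_iff σ hinv z).mpr ⟨hzUT, hzeq⟩
    refine ⟨⟨z, hmem⟩, ?_⟩
    funext p
    have hfr : FreeP i j p.1 := by
      have := p.2
      simp only [Sfin, mem_filter, mem_univ, true_and] at this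
      exact this
    show z p.1.1 p.1.2 = c p
    rw [hzap]
    have hbnI : ¬ p.1.2 < σ p.1.2 := by
      intro hc
      obtain ⟨t, ht⟩ := (memI _).mp hc
      exact hfr.2.1 t ht
    rw [if_neg (fun hc => hbnI hc.2), hc']
    show (if h : FreeP i j ((p : Fin n × Fin n).1, (p : Fin n × Fin n).2) then
      c ⟨((p : Fin n × Fin n).1, (p : Fin n × Fin n).2), by simp [Sfin, h]⟩ else 0) = c p
    rw [dif_pos (show FreeP i j ((p : Fin n × Fin n).1, (p : Fin n × Fin n).2) from hfr)]
  have hbij : Function.Bijective Φ := by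
    constructor
    · rw [← LinearMap.ker_eq_bot]
      exact LinearMap.ker_eq_bot'.mpr hinj
    · exact hsurj
  rw [LinearEquiv.finrank_eq (LinearEquiv.ofBijective Φ hbij), Module.finrank_pi,
    Fintype.card_coe]



/-- the dimension of the commutant of `N_σ` in upper-triangular matrices. -/
theorem stmt1 (n k : ℕ) (hn : 1 ≤ n) (σ : Equiv.Perm (Fin n)) (hσ : IsInvol σ)
    (i j : Fin k → Fin n)
    (hij : ∀ s, i s < j s) (hmono : StrictMono i)
    (hcyc : ∀ s, σ (i s) = j s)
    (hfix : ∀ a : Fin n, (∀ s, a ≠ i s ∧ a ≠ j s) → σ a = a) :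
    (Module.finrank ℂ (commUT (Nmat σ)) : ℤ) =
      ((n * (n + 1) / 2 : ℕ) : ℤ) -
        ((k * n : ℤ) - (∑ s : Fin k, (((j s : ℕ) : ℤ) - ((i s : ℕ) : ℤ))) -
          ∑ s : Fin k,
            (((Finset.univ.filter fun p : Fin k => i p < i s ∧ j p < j s).card : ℤ) +
             ((Finset.univ.filter fun p : Fin k => ((j p : ℕ) < (i s : ℕ))).card : ℤ))) := by
  classical
  have hinv : ∀ a, σ (σ a) = a := by
    intro a; have := Equiv.ext_iff.mp hσ a; simpa using this
  have hji : ∀ s, σ (j s) = i s := fun s => by rw [← hcyc s, hinv]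
  have hdisj : ∀ s t, i s ≠ j t := by
    intro s t h
    have h2 : j s = i t := by rw [← hcyc s, h, hji t]
    have h1 := hij s
    rw [h, h2] at h1
    exact absurd (hij t) (not_lt.mpr h1.le)
  have hjinj : Function.Injective j := by
    intro s t h; apply hmono.injective; rw [← hji s, ← hji t, h]
  have hfr := finrank_commUT σ hσ i j hij hmono hcyc hfix
  have hcount := card_Sfin_eq i j hij hmono hjinj hdisj
  rw [hfr]
  have hR : ∑ s : Fin k, ((Finset.univ.filter fun p : Fin k => i p < i s ∧ j p < j s).card : ℤ)
      = ((univ.filter fun q : Fin k × Fin k => q.2 < q.1 ∧ j q.2 < j q.1).card : ℤ) := by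
    rw [← Nat.cast_sum]
    congr 1
    rw [sum_card_fst' (fun s p : Fin k => i p < i s ∧ j p < j s)]
    congr 1
    apply Finset.filter_congr
    rintro q -
    rw [hmono.lt_iff_lt]
  have hQ : ∑ s : Fin k, ((Finset.univ.filter fun p : Fin k => ((j p : ℕ) < (i s : ℕ))).card : ℤ)
      = ((univ.filter fun q : Fin k × Fin k => j q.2 < i q.1).card : ℤ) := by
    rw [← Nat.cast_sum]
    congr 1
    rw [sum_card_fst' (fun s p : Fin k => (j p : ℕ) < (i s : ℕ))]
    congr 1
  rw [Finset.sum_add_distrib, hR, hQ]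
  push_cast at hcount ⊢
  linarith [hcount]
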